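/- Let V, Q be real Hilbert spaces, A : V × V → ℝ bounded bilinear and coercive with constant a > 0, B : V × Q → ℝ bounded bilinear, and C : Q × Q → ℝ bounded bilinear with C(q,q) ≥ 0 for all q ∈ Q. Assume B satisfies the inf-sup condition: there is β > 0 with sup over nonzero v ∈ V of B(v,q)/‖v‖ ≥ β‖q‖ for all q ∈ Q. Then for every (f, g) ∈ V' × Q' the perturbed saddle-point problem — find (u, p) ∈ V × Q with A(u,v) + B(v,p) = f(v) for all v and B(u,q) − C(p,q) = g(q) for all q — has a unique solution. -/
import Mathlib

open scoped Classical

open InnerProductSpace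

/-- Riesz representation of a bounded bilinear form as an operator. -/
noncomputable def rieszOp {X Y : Type*} [NormedAddCommGroup X] [NormedSpace ℝ X]
    [NormedAddCommGroup Y] [InnerProductSpace ℝ Y] [CompleteSpace Y]
    (D : X →L[ℝ] Y →L[ℝ] ℝ) : X →L[ℝ] Y :=
  LinearMap.mkContinuous
    { toFun := fun x => (toDual ℝ Y).symm (D x)
      map_add' := fun x y => by simp
      map_smul' := fun r x => by simp }
    ‖D‖ fun x => by
      show ‖(toDual ℝ Y).symm (D x)‖ ≤ ‖D‖ * ‖x‖
      rw [LinearIsometryEquiv.norm_map]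
      exact D.le_opNorm x

lemma rieszOp_inner {X Y : Type*} [NormedAddCommGroup X] [NormedSpace ℝ X]
    [NormedAddCommGroup Y] [InnerProductSpace ℝ Y] [CompleteSpace Y]
    (D : X →L[ℝ] Y →L[ℝ] ℝ) (x : X) (y : Y) : ⟪rieszOp D x, y⟫_ℝ = D x y :=
  toDual_symm_apply

/-- The bilinear form of an operator. -/
noncomputable def formOfOp {Y : Type*} [NormedAddCommGroup Y] [InnerProductSpace ℝ Y]
    (T : Y →L[ℝ] Y) : Y →L[ℝ] Y →L[ℝ] ℝ :=
  LinearMap.mkContinuous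
    { toFun := fun p => (innerSL ℝ (T p) : Y →L[ℝ] ℝ)
      map_add' := fun x y => by ext z; simp [inner_add_left]
      map_smul' := fun r x => by ext z; simp [inner_smul_left] }
    ‖T‖ fun p => by
      show ‖innerSL ℝ (T p)‖ ≤ ‖T‖ * ‖p‖
      rw [innerSL_apply_norm]
      exact T.le_opNorm p

lemma formOfOp_apply {Y : Type*} [NormedAddCommGroup Y] [InnerProductSpace ℝ Y]
    (T : Y →L[ℝ] Y) (p q : Y) : formOfOp T p q = ⟪T p, q⟫_ℝ := rfl

/-- Abstract well-posedness of a perturbed saddle-point problem: `A` elliptic,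
`C` positive semidefinite, `B` inf-sup stable; then for every `(f, g)` the problem
has a unique solution `(u, p)`. -/
theorem perturbed_saddle_point_wellposed
    {V Q : Type*} [NormedAddCommGroup V] [InnerProductSpace ℝ V] [CompleteSpace V]
    [NormedAddCommGroup Q] [InnerProductSpace ℝ Q] [CompleteSpace Q]
    (A : V →L[ℝ] V →L[ℝ] ℝ) (B : V →L[ℝ] Q →L[ℝ] ℝ) (C : Q →L[ℝ] Q →L[ℝ] ℝ)
    (a : ℝ) (ha : 0 < a) (hA : ∀ v : V, a * ‖v‖ ^ 2 ≤ A v v)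
    (hC : ∀ q : Q, 0 ≤ C q q)
    (β : ℝ) (hβ : 0 < β)
    (hinfsup : ∀ q : Q, β * ‖q‖ ≤ ⨆ v : {v : V // v ≠ 0}, B v q / ‖(v : V)‖) :
    ∀ (f : V →L[ℝ] ℝ) (g : Q →L[ℝ] ℝ),
      ∃! up : V × Q, (∀ v : V, A up.1 v + B v up.2 = f v) ∧
        (∀ q : Q, B up.1 q - C up.2 q = g q) := by
  intro f g
  -- Lax–Milgram for A
  have hAcoer : IsCoercive A := ⟨a, ha, fun u => le_trans (le_of_eq (by ring)) (hA u)⟩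
  set EA := hAcoer.continuousLinearEquivOfBilin with hEAdef
  have hEA : ∀ u v : V, ⟪EA u, v⟫_ℝ = A u v := fun u v =>
    hAcoer.continuousLinearEquivOfBilin_apply u v
  -- Riesz representations
  set Bstar : Q →L[ℝ] V := rieszOp B.flip with hBstardef
  set Badj : V →L[ℝ] Q := rieszOp B with hBadjdef
  set Cop : Q →L[ℝ] Q := rieszOp C with hCopdef
  have hBstar : ∀ (q : Q) (v : V), ⟪Bstar q, v⟫_ℝ = B v q := fun q v => rieszOp_inner B.flip q v
  have hBadj : ∀ (v : V) (q : Q), ⟪Badj v, q⟫_ℝ = B v q := fun v q => rieszOp_inner B v q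
  have hCop : ∀ (p q : Q), ⟪Cop p, q⟫_ℝ = C p q := fun p q => rieszOp_inner C p q
  -- norm bounds
  have hBstar_lb : ∀ q : Q, β * ‖q‖ ≤ ‖Bstar q‖ := by
    intro q
    refine le_trans (hinfsup q) (Real.iSup_le ?_ (norm_nonneg _))
    rintro ⟨v, hv⟩
    show B v q / ‖v‖ ≤ ‖Bstar q‖
    rw [div_le_iff₀ (norm_pos_iff.mpr hv)]
    calc B v q = ⟪Bstar q, v⟫_ℝ := (hBstar q v).symm
      _ ≤ ‖Bstar q‖ * ‖v‖ := real_inner_le_norm _ _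
  have hEA_ub : ∀ w : V, ‖EA w‖ ≤ ‖A‖ * ‖w‖ := by
    intro w
    rcases eq_or_lt_of_le (norm_nonneg (EA w)) with h | h
    · rw [← h]; positivity
    · have h1 : ‖EA w‖ * ‖EA w‖ ≤ (‖A‖ * ‖w‖) * ‖EA w‖ := by
        calc ‖EA w‖ * ‖EA w‖ = ⟪EA w, EA w⟫_ℝ := (real_inner_self_eq_norm_mul_norm _).symm
          _ = A w (EA w) := hEA w (EA w)
          _ ≤ |A w (EA w)| := le_abs_self _
          _ = ‖A w (EA w)‖ := (Real.norm_eq_abs _).symm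
          _ ≤ ‖A‖ * ‖w‖ * ‖EA w‖ := A.le_opNorm₂ w (EA w)
      exact le_of_mul_le_mul_right h1 h
  -- the Schur complement operator
  set S : Q →L[ℝ] Q := (Badj.comp ((EA.symm : V →L[ℝ] V).comp Bstar)) + Cop with hSdef
  have hSapp : ∀ p : Q, S p = Badj (EA.symm (Bstar p)) + Cop p := fun p => rfl
  -- coercivity of the Schur complement
  have hScoer : IsCoercive (formOfOp S) := by
    refine ⟨a * β ^ 2 / (‖A‖ + 1) ^ 2, by positivity, fun p => ?_⟩
    set w := EA.symm (Bstar p) with hwdef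
    have hw : EA w = Bstar p := EA.apply_symm_apply (Bstar p)
    have h1 : β * ‖p‖ ≤ (‖A‖ + 1) * ‖w‖ := by
      calc β * ‖p‖ ≤ ‖Bstar p‖ := hBstar_lb p
        _ = ‖EA w‖ := by rw [hw]
        _ ≤ ‖A‖ * ‖w‖ := hEA_ub w
        _ ≤ (‖A‖ + 1) * ‖w‖ := by nlinarith [norm_nonneg w]
    have h2 : a * ‖w‖ ^ 2 ≤ ⟪Badj w, p⟫_ℝ := by
      calc a * ‖w‖ ^ 2 ≤ A w w := hA w
        _ = ⟪EA w, w⟫_ℝ := (hEA w w).symm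
        _ = ⟪Bstar p, w⟫_ℝ := by rw [hw]
        _ = B w p := hBstar p w
        _ = ⟪Badj w, p⟫_ℝ := (hBadj w p).symm
    have h3 : 0 ≤ ⟪Cop p, p⟫_ℝ := by rw [hCop]; exact hC p
    have hSval : formOfOp S p p = ⟪Badj w, p⟫_ℝ + ⟪Cop p, p⟫_ℝ := by
      rw [formOfOp_apply, hSapp, inner_add_left]
    rw [hSval, div_mul_eq_mul_div, div_mul_eq_mul_div, div_le_iff₀ (by positivity)]
    have h4 : (β * ‖p‖) * (β * ‖p‖) ≤ ((‖A‖ + 1) * ‖w‖) * ((‖A‖ + 1) * ‖w‖) :=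
      mul_le_mul h1 h1 (by positivity) (by positivity)
    have key : a * β ^ 2 * (‖p‖ * ‖p‖) ≤ (⟪Badj w, p⟫_ℝ + ⟪Cop p, p⟫_ℝ) * (‖A‖ + 1) ^ 2 := by
      calc a * β ^ 2 * (‖p‖ * ‖p‖) = a * ((β * ‖p‖) * (β * ‖p‖)) := by ring
        _ ≤ a * (((‖A‖ + 1) * ‖w‖) * ((‖A‖ + 1) * ‖w‖)) :=
            mul_le_mul_of_nonneg_left h4 ha.le
        _ = (a * ‖w‖ ^ 2) * (‖A‖ + 1) ^ 2 := by ring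
        _ ≤ ⟪Badj w, p⟫_ℝ * (‖A‖ + 1) ^ 2 :=
            mul_le_mul_of_nonneg_right h2 (by positivity)
        _ ≤ (⟪Badj w, p⟫_ℝ + ⟪Cop p, p⟫_ℝ) * (‖A‖ + 1) ^ 2 :=
            mul_le_mul_of_nonneg_right (le_add_of_nonneg_right h3) (by positivity)
    linarith [key]
  set ES := hScoer.continuousLinearEquivOfBilin with hESdef
  have hES : ∀ p : Q, ES p = S p := by
    intro p
    refine ext_inner_right ℝ fun q => ?_
    rw [hScoer.continuousLinearEquivOfBilin_apply, formOfOp_apply]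
  -- Riesz representatives of the data
  set F : V := (toDual ℝ V).symm f with hFdef
  set G : Q := (toDual ℝ Q).symm g with hGdef
  have hF : ∀ v : V, ⟪F, v⟫_ℝ = f v := fun v => toDual_symm_apply
  have hG : ∀ q : Q, ⟪G, q⟫_ℝ = g q := fun q => toDual_symm_apply
  -- reformulation of the two equations
  have heq1 : ∀ u : V, ∀ p : Q, (∀ v : V, A u v + B v p = f v) ↔ EA u + Bstar p = F := by
    intro u p
    constructor
    · intro h
      refine ext_inner_right ℝ fun v => ?_
      rw [inner_add_left, hEA, hBstar, hF, h v]
    · intro h v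
      have := congrArg (fun x => ⟪x, v⟫_ℝ) h
      simpa only [inner_add_left, hEA, hBstar, hF] using this
  have heq2 : ∀ u : V, ∀ p : Q, (∀ q : Q, B u q - C p q = g q) ↔ Badj u - Cop p = G := by
    intro u p
    constructor
    · intro h
      refine ext_inner_right ℝ fun q => ?_
      rw [inner_sub_left, hBadj, hCop, hG, h q]
    · intro h q
      have := congrArg (fun x => ⟪x, q⟫_ℝ) h
      simpa only [inner_sub_left, hBadj, hCop, hG] using this
  -- the solution
  set p₀ : Q := ES.symm (Badj (EA.symm F) - G) with hp0def
  set u₀ : V := EA.symm (F - Bstar p₀) with hu0def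
  have hSp₀ : S p₀ = Badj (EA.symm F) - G := by
    rw [← hES]; exact ES.apply_symm_apply _
  refine ⟨(u₀, p₀), ⟨?_, ?_⟩, ?_⟩
  · rw [heq1]
    show EA (EA.symm (F - Bstar p₀)) + Bstar p₀ = F
    rw [EA.apply_symm_apply]; abel
  · rw [heq2]
    show Badj u₀ - Cop p₀ = G
    have : Badj u₀ = Badj (EA.symm F) - Badj (EA.symm (Bstar p₀)) := by
      rw [hu0def]; rw [map_sub, map_sub]
    rw [this]
    have h5 := hSp₀
    rw [hSapp] at h5
    -- h5 : Badj (EA.symm (Bstar p₀)) + Cop p₀ = Badj (EA.symm F) - G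
    calc Badj (EA.symm F) - Badj (EA.symm (Bstar p₀)) - Cop p₀
        = Badj (EA.symm F) - (Badj (EA.symm (Bstar p₀)) + Cop p₀) := by abel
      _ = Badj (EA.symm F) - (Badj (EA.symm F) - G) := by rw [h5]
      _ = G := by abel
  · rintro ⟨u, p⟩ ⟨h1, h2⟩
    rw [heq1] at h1
    rw [heq2] at h2
    -- derive S p = Badj (EA.symm F) - G
    have hu : u = EA.symm (F - Bstar p) := by
      have : EA u = F - Bstar p := by rw [← h1]; abel
      rw [← this, EA.symm_apply_apply]
    have hSp : S p = Badj (EA.symm F) - G := by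
      rw [hSapp]
      have hx : EA.symm (Bstar p) = EA.symm F - u := by
        rw [hu, map_sub]; abel
      rw [hx, map_sub, ← h2]; abel
    have hp : p = p₀ := by
      have : ES p = ES p₀ := by rw [hES, hES, hSp, hSp₀]
      exact ES.injective this
    have huu : u = u₀ := by rw [hu, hp, hu0def]
    exact Prod.ext huu hp
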